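/- Let a hyperbolic triangle have edge lengths l_rs (for {r,s}⊂{i,j,k}) given in terms of fixed background lengths d_rs and conformal factors u_i, u_j, u_k by sinh(l_rs/2) = sinh(d_rs/2)·e^{u_r+u_s}. Then the partial derivative of the angle α_i (opposite edge {jk}) with respect to u_j equals (1/cosh²(l_ij/2))·tan((α_i+α_j−α_k)/2). -/

import Mathlib

open Real

/-- Vertex-scaled edge length: `l` with `sinh(l/2) = sinh(d/2)·e^(ur+us)`. -/
noncomputable def vsLen (d ur us : ℝ) : ℝ :=
  2 * Real.arsinh (Real.sinh (d / 2) * Real.exp (ur + us))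

/-- The triangle inequalities for the vertex-scaled lengths. -/
def vsAdm (dij dik djk ui uj uk : ℝ) : Prop :=
  vsLen djk uj uk < vsLen dik ui uk + vsLen dij ui uj ∧
  vsLen dik ui uk < vsLen djk uj uk + vsLen dij ui uj ∧
  vsLen dij ui uj < vsLen djk uj uk + vsLen dik ui uk

set_option maxHeartbeats 2000000

lemma vsLen_pos {d : ℝ} (hd : 0 < d) (ur us : ℝ) : 0 < vsLen d ur us := by
  have h : 0 < Real.sinh (d / 2) * Real.exp (ur + us) :=
    mul_pos (Real.sinh_pos_iff.mpr (by linarith)) (Real.exp_pos _)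
  have := Real.arsinh_pos_iff.mpr h
  unfold vsLen; linarith

lemma vsLen_hasDerivAt_right (d x t : ℝ) :
    HasDerivAt (fun s => vsLen d x s)
      (2 * (Real.sinh (vsLen d x t / 2) / Real.cosh (vsLen d x t / 2))) t := by
  set y : ℝ := Real.sinh (d / 2) * Real.exp (x + t) with hy
  have h1 : HasDerivAt (fun s : ℝ => Real.sinh (d / 2) * Real.exp (x + s)) y t := by
    have h0 : HasDerivAt (fun s : ℝ => x + s) 1 t := (hasDerivAt_id t).const_add x
    simpa [hy, mul_comm] using h0.exp.const_mul (Real.sinh (d / 2))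
  have h2 := (Real.hasDerivAt_arsinh y).comp t h1
  have h3 := h2.const_mul (2 : ℝ)
  have harg : vsLen d x t / 2 = Real.arsinh y := by unfold vsLen; ring
  have heq : 2 * ((Real.sqrt (1 + y ^ 2))⁻¹ * y)
      = 2 * (Real.sinh (vsLen d x t / 2) / Real.cosh (vsLen d x t / 2)) := by
    rw [harg, Real.sinh_arsinh, Real.cosh_arsinh]; ring
  exact heq ▸ h3

lemma vsLen_hasDerivAt_left (d y t : ℝ) :
    HasDerivAt (fun s => vsLen d s y)
      (2 * (Real.sinh (vsLen d t y / 2) / Real.cosh (vsLen d t y / 2))) t := by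
  set w : ℝ := Real.sinh (d / 2) * Real.exp (t + y) with hw
  have h1 : HasDerivAt (fun s : ℝ => Real.sinh (d / 2) * Real.exp (s + y)) w t := by
    have h0 : HasDerivAt (fun s : ℝ => s + y) 1 t := (hasDerivAt_id t).add_const y
    simpa [hw, mul_comm] using h0.exp.const_mul (Real.sinh (d / 2))
  have h2 := (Real.hasDerivAt_arsinh w).comp t h1
  have h3 := h2.const_mul (2 : ℝ)
  have harg : vsLen d t y / 2 = Real.arsinh w := by unfold vsLen; ring
  have heq : 2 * ((Real.sqrt (1 + w ^ 2))⁻¹ * w)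
      = 2 * (Real.sinh (vsLen d t y / 2) / Real.cosh (vsLen d t y / 2)) := by
    rw [harg, Real.sinh_arsinh, Real.cosh_arsinh]; ring
  exact heq ▸ h3

lemma tanh_half_eq (L : ℝ) :
    2 * (Real.sinh (L / 2) / Real.cosh (L / 2)) = 2 * Real.sinh L / (1 + Real.cosh L) := by
  have hs2 := Real.sinh_two_mul (L / 2)
  have hc2 := Real.cosh_two_mul (L / 2)
  rw [show 2 * (L / 2) = L by ring] at hs2 hc2
  have hsq := Real.cosh_sq (L / 2)
  have hpos : (0:ℝ) < Real.cosh (L / 2) := Real.cosh_pos (L / 2)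
  have hden : 1 + Real.cosh L = 2 * Real.cosh (L / 2) ^ 2 := by rw [hc2]; linarith
  rw [hden, hs2]
  field_simp

lemma one_div_cosh_half_sq (L : ℝ) :
    1 / Real.cosh (L / 2) ^ 2 = 2 / (1 + Real.cosh L) := by
  have hc2 := Real.cosh_two_mul (L / 2)
  rw [show 2 * (L / 2) = L by ring] at hc2
  have hsq := Real.cosh_sq (L / 2)
  have hden : 1 + Real.cosh L = 2 * Real.cosh (L / 2) ^ 2 := by rw [hc2]; linarith
  rw [hden]
  have hpos : (0:ℝ) < Real.cosh (L / 2) := Real.cosh_pos (L / 2)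
  field_simp

lemma tan_half_calc (x y z A B C sa sb sc D : ℝ)
    (hsa : 0 < sa) (hsb : 0 < sb) (hsc : 0 < sc) (hD : 0 < D)
    (hA : 1 < A) (hB : 1 < B) (hC : 1 < C)
    (ha2 : sa^2 = A^2 - 1) (hb2 : sb^2 = B^2 - 1) (hc2 : sc^2 = C^2 - 1)
    (hD2 : D^2 = 1 + 2*A*B*C - A^2 - B^2 - C^2)
    (hcx : Real.cos x = (C*B - A)/(sc*sb)) (hsx : Real.sin x = D/(sc*sb))
    (hcy : Real.cos y = (C*A - B)/(sc*sa)) (hsy : Real.sin y = D/(sc*sa))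
    (hcz : Real.cos z = (B*A - C)/(sb*sa)) (hsz : Real.sin z = D/(sb*sa)) :
    Real.tan ((x+y-z)/2) = (A+B-C-1)/D := by
  have hsa' := hsa.ne'
  have hsb' := hsb.ne'
  have hsc' := hsc.ne'
  have hP2 : (0:ℝ) < sa^2*sb^2*sc^2 := by positivity
  have e0 : Real.sin (x+y-z) * (sa^2*sb^2*sc^2)
      = D * ((C*A-B)*(B*A-C) + (C*B-A)*(B*A-C) - (C*B-A)*(C*A-B) + D^2) := by
    rw [Real.sin_sub, Real.sin_add, Real.cos_add, hcx, hsx, hcy, hsy, hcz, hsz]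
    field_simp
    ring
  have e1 : Real.sin (x+y-z) * (sa^2*sb^2*sc^2)
      = D * ((A+B-C-1)*(A+1)*(B+1)*(C-1)) := by
    linear_combination e0 + D*hD2
  have e2 : (1 + Real.cos (x+y-z)) * (sa^2*sb^2*sc^2)
      = sa^2*sb^2*sc^2 + ((C*B-A)*(C*A-B)*(B*A-C) - D^2*(B*A-C) + D^2*(C*A-B) + D^2*(C*B-A)) := by
    rw [Real.cos_sub, Real.cos_add, Real.sin_add, hcx, hsx, hcy, hsy, hcz, hsz]
    field_simp
    ring
  have e2' : (1 + Real.cos (x+y-z)) * (sa^2*sb^2*sc^2)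
      = (A+1)*(B+1)*(C-1)*D^2 := by
    linear_combination e2 + (sb^2*sc^2)*ha2 + ((A^2-1)*sc^2)*hb2 + ((A^2-1)*(B^2-1))*hc2
      + ((C*A-B) + (C*B-A) - (B*A-C) - (A+1)*(B+1)*(C-1))*hD2
  have hK : (0:ℝ) < (A+1)*(B+1)*(C-1)*D^2 := by
    have h1 : (0:ℝ) < A+1 := by linarith
    have h2 : (0:ℝ) < B+1 := by linarith
    have h3 : (0:ℝ) < C-1 := by linarith
    positivity
  have hpos : 0 < 1 + Real.cos (x+y-z) := by
    have h14 : 1 + Real.cos (x+y-z) = ((A+1)*(B+1)*(C-1)*D^2)/(sa^2*sb^2*sc^2) := by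
      rw [eq_div_iff hP2.ne']; exact e2'
    rw [h14]; exact div_pos hK hP2
  have hhalf_cos : Real.cos ((x+y-z)/2)^2 = (1+Real.cos (x+y-z))/2 := by
    have h := Real.cos_sq ((x+y-z)/2)
    rw [show 2*((x+y-z)/2) = x+y-z by ring] at h
    linarith
  have hcoshalf : Real.cos ((x+y-z)/2) ≠ 0 := by
    intro h; rw [h] at hhalf_cos; norm_num at hhalf_cos; linarith
  have hsinθ : Real.sin (x+y-z) = 2*Real.sin ((x+y-z)/2)*Real.cos ((x+y-z)/2) := by
    have h := Real.sin_two_mul ((x+y-z)/2)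
    rw [show 2*((x+y-z)/2) = x+y-z by ring] at h
    linarith
  have e3 : Real.cos ((x+y-z)/2)^2*(sa^2*sb^2*sc^2) = (A+1)*(B+1)*(C-1)*D^2/2 := by
    rw [hhalf_cos]; linarith [e2']
  have e1' : (2*Real.sin ((x+y-z)/2)*Real.cos ((x+y-z)/2)) * (sa^2*sb^2*sc^2)
      = D*((A+B-C-1)*(A+1)*(B+1)*(C-1)) := by rw [← hsinθ]; exact e1
  have hfac : (Real.sin ((x+y-z)/2)*D - (A+B-C-1)*Real.cos ((x+y-z)/2))
      * (2*Real.cos ((x+y-z)/2)*(sa^2*sb^2*sc^2)) = 0 := by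
    linear_combination D*e1' - 2*(A+B-C-1)*e3
  have hfac2 : (2*Real.cos ((x+y-z)/2)*(sa^2*sb^2*sc^2)) ≠ 0 := by
    intro h
    rcases mul_eq_zero.mp h with h' | h'
    · rcases mul_eq_zero.mp h' with h'' | h''
      · norm_num at h''
      · exact hcoshalf h''
    · exact hP2.ne' h'
  have hmain : Real.sin ((x+y-z)/2)*D = (A+B-C-1)*Real.cos ((x+y-z)/2) := by
    rcases mul_eq_zero.mp hfac with h | h
    · linarith [h]
    · exact absurd h hfac2
  rw [Real.tan_eq_sin_div_cos, div_eq_div_iff hcoshalf hD.ne']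
  linarith [hmain]

lemma final_calc (A B C sa sb sc D : ℝ)
    (hsb : 0 < sb) (hsc : 0 < sc) (hD : 0 < D) (hA : 1 < A) (hC : 1 < C)
    (ha2 : sa^2 = A^2 - 1) (hc2 : sc^2 = C^2 - 1) :
    -(1/(D/(sc*sb))) *
      (((sc * (2*sc/(1+C)) * B - sa * (2*sa/(1+A))) * (sc*sb)
          - (C*B - A) * (C * (2*sc/(1+C)) * sb)) / (sc*sb)^2)
      = 2/(1+C) * ((A+B-C-1)/D) := by
  have h1C : (1:ℝ)+C ≠ 0 := by linarith
  have h1A : (1:ℝ)+A ≠ 0 := by linarith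
  have hsb' := hsb.ne'
  have hsc' := hsc.ne'
  have hD' := hD.ne'
  have step1 : sc * (2*sc/(1+C)) = 2*(C-1) := by
    field_simp
    linear_combination hc2
  have step2 : sa * (2*sa/(1+A)) = 2*(A-1) := by
    field_simp
    linear_combination ha2
  rw [step1, step2]
  field_simp
  ring


/-- In the vertex-scaling setup, the partial derivative of the angle `αi`
(opposite the edge `{jk}`) with respect to `uj` equals
`(1/cosh²(lij/2))·tan((αi+αj−αk)/2)`. -/
theorem stmt3 (dij dik djk : ℝ) (hdij : 0 < dij) (hdik : 0 < dik) (hdjk : 0 < djk)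
    (αi αj αk : ℝ → ℝ → ℝ → ℝ)
    (hang : ∀ ui uj uk, vsAdm dij dik djk ui uj uk →
      αi ui uj uk ∈ Set.Ioo 0 π ∧ αj ui uj uk ∈ Set.Ioo 0 π ∧ αk ui uj uk ∈ Set.Ioo 0 π ∧
      Real.cos (αi ui uj uk) =
        (Real.cosh (vsLen dij ui uj) * Real.cosh (vsLen dik ui uk)
            - Real.cosh (vsLen djk uj uk)) /
          (Real.sinh (vsLen dij ui uj) * Real.sinh (vsLen dik ui uk)) ∧
      Real.cos (αj ui uj uk) =
        (Real.cosh (vsLen dij ui uj) * Real.cosh (vsLen djk uj uk)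
            - Real.cosh (vsLen dik ui uk)) /
          (Real.sinh (vsLen dij ui uj) * Real.sinh (vsLen djk uj uk)) ∧
      Real.cos (αk ui uj uk) =
        (Real.cosh (vsLen dik ui uk) * Real.cosh (vsLen djk uj uk)
            - Real.cosh (vsLen dij ui uj)) /
          (Real.sinh (vsLen dik ui uk) * Real.sinh (vsLen djk uj uk)))
    (ui uj uk : ℝ) (hadm : vsAdm dij dik djk ui uj uk) :
    deriv (fun t => αi ui t uk) uj =
      (1 / Real.cosh (vsLen dij ui uj / 2) ^ 2) *
        Real.tan ((αi ui uj uk + αj ui uj uk - αk ui uj uk) / 2) := by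
  obtain ⟨hIi, hIj, hIk, hci, hcj, hck⟩ := hang ui uj uk hadm
  have hlij := vsLen_pos hdij ui uj
  have hlik := vsLen_pos hdik ui uk
  have hljk := vsLen_pos hdjk uj uk
  have hsc : 0 < Real.sinh (vsLen dij ui uj) := Real.sinh_pos_iff.mpr hlij
  have hsb : 0 < Real.sinh (vsLen dik ui uk) := Real.sinh_pos_iff.mpr hlik
  have hsa : 0 < Real.sinh (vsLen djk uj uk) := Real.sinh_pos_iff.mpr hljk
  have hC : 1 < Real.cosh (vsLen dij ui uj) := Real.one_lt_cosh.mpr hlij.ne'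
  have hB : 1 < Real.cosh (vsLen dik ui uk) := Real.one_lt_cosh.mpr hlik.ne'
  have hA : 1 < Real.cosh (vsLen djk uj uk) := Real.one_lt_cosh.mpr hljk.ne'
  have hsc2 : Real.sinh (vsLen dij ui uj)^2 = Real.cosh (vsLen dij ui uj)^2 - 1 := by
    have := Real.cosh_sq (vsLen dij ui uj); linarith
  have hsb2 : Real.sinh (vsLen dik ui uk)^2 = Real.cosh (vsLen dik ui uk)^2 - 1 := by
    have := Real.cosh_sq (vsLen dik ui uk); linarith
  have hsa2 : Real.sinh (vsLen djk uj uk)^2 = Real.cosh (vsLen djk uj uk)^2 - 1 := by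
    have := Real.cosh_sq (vsLen djk uj uk); linarith
  have hsinI : 0 < Real.sin (αi ui uj uk) := Real.sin_pos_of_pos_of_lt_pi hIi.1 hIi.2
  have hsinJ : 0 < Real.sin (αj ui uj uk) := Real.sin_pos_of_pos_of_lt_pi hIj.1 hIj.2
  have hsinK : 0 < Real.sin (αk ui uj uk) := Real.sin_pos_of_pos_of_lt_pi hIk.1 hIk.2
  -- abbreviations (as plain reals)
  set Av := Real.cosh (vsLen djk uj uk) with hAv
  set Bv := Real.cosh (vsLen dik ui uk) with hBv
  set Cv := Real.cosh (vsLen dij ui uj) with hCv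
  set sav := Real.sinh (vsLen djk uj uk) with hsav
  set sbv := Real.sinh (vsLen dik ui uk) with hsbv
  set scv := Real.sinh (vsLen dij ui uj) with hscv
  set D := Real.sin (αi ui uj uk) * (scv * sbv) with hDdef
  have hD : 0 < D := by rw [hDdef]; exact mul_pos hsinI (mul_pos hsc hsb)
  have hci' : Real.cos (αi ui uj uk) = (Cv*Bv - Av)/(scv*sbv) := hci
  have hcj' : Real.cos (αj ui uj uk) = (Cv*Av - Bv)/(scv*sav) := hcj
  have hck' : Real.cos (αk ui uj uk) = (Bv*Av - Cv)/(sbv*sav) := hck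
  have hsx : Real.sin (αi ui uj uk) = D/(scv*sbv) := by
    rw [hDdef]; field_simp
  have hcos_mulI : Real.cos (αi ui uj uk) * (scv*sbv) = Cv*Bv - Av := by
    rw [hci']; field_simp
  have hsqI := Real.sin_sq_add_cos_sq (αi ui uj uk)
  have hD2 : D^2 = 1 + 2*Av*Bv*Cv - Av^2 - Bv^2 - Cv^2 := by
    have hstep : D^2 = (scv*sbv)^2 - (Cv*Bv - Av)^2 := by
      linear_combination (D + Real.sin (αi ui uj uk)*(scv*sbv))*hDdef
        + (scv*sbv)^2*hsqI
        - (Real.cos (αi ui uj uk)*(scv*sbv) + (Cv*Bv - Av))*hcos_mulI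
    linear_combination hstep + (sbv^2)*hsc2 + (Cv^2-1)*hsb2
  -- sin values for αj, αk
  have hcos_mulJ : Real.cos (αj ui uj uk) * (scv*sav) = Cv*Av - Bv := by
    rw [hcj']; field_simp
  have hsqJ := Real.sin_sq_add_cos_sq (αj ui uj uk)
  have hsyD : Real.sin (αj ui uj uk) * (scv*sav) = D := by
    have hsq : (Real.sin (αj ui uj uk) * (scv*sav))^2 = D^2 := by
      have : (Real.sin (αj ui uj uk) * (scv*sav))^2 = (scv*sav)^2 - (Cv*Av - Bv)^2 := by
        linear_combination (scv*sav)^2*hsqJ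
          - (Real.cos (αj ui uj uk)*(scv*sav) + (Cv*Av - Bv))*hcos_mulJ
      rw [this, hD2]
      linear_combination (sav^2)*hsc2 + (Cv^2-1)*hsa2
    have h1 : 0 ≤ Real.sin (αj ui uj uk) * (scv*sav) :=
      le_of_lt (mul_pos hsinJ (mul_pos hsc hsa))
    exact (sq_eq_sq₀ h1 hD.le).mp hsq
  have hsy : Real.sin (αj ui uj uk) = D/(scv*sav) := by
    rw [eq_div_iff (mul_ne_zero hsc.ne' hsa.ne')]; exact hsyD
  have hcos_mulK : Real.cos (αk ui uj uk) * (sbv*sav) = Bv*Av - Cv := by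
    rw [hck']; field_simp
  have hsqK := Real.sin_sq_add_cos_sq (αk ui uj uk)
  have hszD : Real.sin (αk ui uj uk) * (sbv*sav) = D := by
    have hsq : (Real.sin (αk ui uj uk) * (sbv*sav))^2 = D^2 := by
      have : (Real.sin (αk ui uj uk) * (sbv*sav))^2 = (sbv*sav)^2 - (Bv*Av - Cv)^2 := by
        linear_combination (sbv*sav)^2*hsqK
          - (Real.cos (αk ui uj uk)*(sbv*sav) + (Bv*Av - Cv))*hcos_mulK
      rw [this, hD2]
      linear_combination (sav^2)*hsb2 + (Bv^2-1)*hsa2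
    have h1 : 0 ≤ Real.sin (αk ui uj uk) * (sbv*sav) :=
      le_of_lt (mul_pos hsinK (mul_pos hsb hsa))
    exact (sq_eq_sq₀ h1 hD.le).mp hsq
  have hsz : Real.sin (αk ui uj uk) = D/(sbv*sav) := by
    rw [eq_div_iff (mul_ne_zero hsb.ne' hsa.ne')]; exact hszD
  -- tan value
  have htan : Real.tan ((αi ui uj uk + αj ui uj uk - αk ui uj uk)/2)
      = (Av+Bv-Cv-1)/D :=
    tan_half_calc _ _ _ Av Bv Cv sav sbv scv D hsa hsb hsc hD hA hB hC
      hsa2 hsb2 hsc2 hD2 hci' hsx hcj' hsy hck' hsz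
  -- eventual admissibility
  have hcontc : ContinuousAt (fun t => vsLen dij ui t) uj :=
    (vsLen_hasDerivAt_right dij ui uj).continuousAt
  have hconta : ContinuousAt (fun t => vsLen djk t uk) uj :=
    (vsLen_hasDerivAt_left djk uk uj).continuousAt
  have hev : ∀ᶠ t in nhds uj, vsAdm dij dik djk ui t uk := by
    have h1 : ∀ᶠ t in nhds uj, vsLen djk t uk < vsLen dik ui uk + vsLen dij ui t :=
      hconta.eventually_lt (continuousAt_const.add hcontc) hadm.1
    have h2 : ∀ᶠ t in nhds uj, vsLen dik ui uk < vsLen djk t uk + vsLen dij ui t :=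
      continuousAt_const.eventually_lt (hconta.add hcontc) hadm.2.1
    have h3 : ∀ᶠ t in nhds uj, vsLen dij ui t < vsLen djk t uk + vsLen dik ui uk :=
      hcontc.eventually_lt (hconta.add continuousAt_const) hadm.2.2
    filter_upwards [h1, h2, h3] with t p1 p2 p3
    exact ⟨p1, p2, p3⟩
  -- the explicit cosine function
  have hFev : (fun t => αi ui t uk) =ᶠ[nhds uj]
      (fun t => Real.arccos ((Real.cosh (vsLen dij ui t) * Bv - Real.cosh (vsLen djk t uk)) /
        (Real.sinh (vsLen dij ui t) * sbv))) := by
    filter_upwards [hev] with t ht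
    obtain ⟨h1, _, _, h4, _, _⟩ := hang ui t uk ht
    rw [← h4, Real.arccos_cos h1.1.le h1.2.le]
  have hderiveq : deriv (fun t => αi ui t uk) uj
      = deriv (fun t => Real.arccos ((Real.cosh (vsLen dij ui t) * Bv - Real.cosh (vsLen djk t uk)) /
        (Real.sinh (vsLen dij ui t) * sbv))) uj := hFev.deriv_eq
  -- derivatives of lengths with canonically-shaped values
  have hLc : HasDerivAt (fun t => vsLen dij ui t) (2*scv/(1+Cv)) uj := by
    have := vsLen_hasDerivAt_right dij ui uj
    rwa [tanh_half_eq, ← hscv, ← hCv] at this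
  have hLa : HasDerivAt (fun t => vsLen djk t uk) (2*sav/(1+Av)) uj := by
    have := vsLen_hasDerivAt_left djk uk uj
    rwa [tanh_half_eq, ← hsav, ← hAv] at this
  have hnum : HasDerivAt
      (fun t => Real.cosh (vsLen dij ui t) * Bv - Real.cosh (vsLen djk t uk))
      (scv * (2*scv/(1+Cv)) * Bv - sav * (2*sav/(1+Av))) uj :=
    ((hLc.cosh).mul_const Bv).sub (hLa.cosh)
  have hden : HasDerivAt
      (fun t => Real.sinh (vsLen dij ui t) * sbv)
      (Cv * (2*scv/(1+Cv)) * sbv) uj :=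
    (hLc.sinh).mul_const sbv
  have hdenne : Real.sinh (vsLen dij ui uj) * sbv ≠ 0 := mul_ne_zero hsc.ne' hsb.ne'
  have hF : HasDerivAt
      (fun t => (Real.cosh (vsLen dij ui t) * Bv - Real.cosh (vsLen djk t uk)) /
        (Real.sinh (vsLen dij ui t) * sbv))
      (((scv * (2*scv/(1+Cv)) * Bv - sav * (2*sav/(1+Av))) * (scv*sbv)
          - (Cv*Bv - Av) * (Cv * (2*scv/(1+Cv)) * sbv)) / (scv*sbv)^2) uj := by
    exact hnum.div hden hdenne
  -- arccos composition
  have hs1 : Real.sin (αi ui uj uk) ^ 2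
      = 1 - ((Cv*Bv - Av)/(scv*sbv))^2 := by
    rw [← hci']; linarith [hsqI]
  have hne1 : (Cv*Bv - Av)/(scv*sbv) ≠ 1 := by
    intro h; rw [h] at hs1; norm_num at hs1
    linarith
  have hnem1 : (Cv*Bv - Av)/(scv*sbv) ≠ -1 := by
    intro h; rw [h] at hs1; norm_num at hs1
    linarith
  have harccos := Real.hasDerivAt_arccos hnem1 hne1
  have harc : HasDerivAt
      (fun t => Real.arccos ((Real.cosh (vsLen dij ui t) * Bv - Real.cosh (vsLen djk t uk)) /
        (Real.sinh (vsLen dij ui t) * sbv)))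
      (-(1 / Real.sqrt (1 - ((Cv*Bv - Av)/(scv*sbv))^2)) *
        (((scv * (2*scv/(1+Cv)) * Bv - sav * (2*sav/(1+Av))) * (scv*sbv)
          - (Cv*Bv - Av) * (Cv * (2*scv/(1+Cv)) * sbv)) / (scv*sbv)^2)) uj := by
    have h := harccos.comp uj hF
    exact h
  have hsqrt : Real.sqrt (1 - ((Cv*Bv - Av)/(scv*sbv))^2) = Real.sin (αi ui uj uk) := by
    rw [← hs1, Real.sqrt_sq hsinI.le]
  rw [hderiveq, harc.deriv, hsqrt, hsx, htan, one_div_cosh_half_sq, ← hCv]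
  exact final_calc Av Bv Cv sav sbv scv D hsb hsc hD hA hC hsa2 hsc2
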